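/- With w(x,t) = inf_{τ∈[0,t), y∈ℝⁿ} [(t−τ)·L̄((x−y)/(t−τ)) + f(y,τ)] for t > 0 and w(x,0) = g(x), the following Dynamic Programming Principle holds for every 0 < s < t and x ∈ ℝⁿ: w(x,t) equals the infimum over τ ∈ [0,t) and y ∈ ℝⁿ of (t − max(τ,s))·L̄((x−y)/(t − max(τ,s))) + [w(y,s) if s > τ, f(y,τ) if s ≤ τ]. -/

import Mathlib

open NNReal

theorem stmt_5 (n : ℕ) (Lbar : EuclideanSpace ℝ (Fin n) → ℝ) (K₀ : ℝ) (hK₀ : 0 < K₀)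
    (hLc : Continuous Lbar) (hLconv : ConvexOn ℝ Set.univ Lbar)
    (hLb : ∀ v, ‖v‖ ^ 2 / 2 - K₀ ≤ Lbar v ∧ Lbar v ≤ ‖v‖ ^ 2 / 2 + K₀)
    (g bbar : EuclideanSpace ℝ (Fin n) → ℝ)
    (Lg : ℝ≥0) (hglip : LipschitzWith Lg g)
    (hgbd : ∃ M, ∀ x, |g x| ≤ M) (hbbd : ∃ M, ∀ x, |bbar x| ≤ M)
    (hbuc : UniformContinuous bbar)
    (hgb : ∀ x, g x ≤ bbar x)
    (f : EuclideanSpace ℝ (Fin n) → ℝ → ℝ)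
    (hf0 : ∀ y, f y 0 = g y) (hfp : ∀ y τ, 0 < τ → f y τ = bbar y)
    (w : EuclideanSpace ℝ (Fin n) → ℝ → ℝ)
    (hw0 : ∀ x, w x 0 = g x)
    (hw : ∀ x t, 0 < t → w x t =
      sInf {r | ∃ (τ : ℝ) (y : EuclideanSpace ℝ (Fin n)), 0 ≤ τ ∧ τ < t ∧
        r = (t - τ) * Lbar ((t - τ)⁻¹ • (x - y)) + f y τ}) :
    ∀ (x : EuclideanSpace ℝ (Fin n)) (s t : ℝ), 0 < s → s < t →
      w x t = sInf {r | ∃ (τ : ℝ) (y : EuclideanSpace ℝ (Fin n)), 0 ≤ τ ∧ τ < t ∧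
        r = (t - max τ s) * Lbar ((t - max τ s)⁻¹ • (x - y)) +
          (if τ < s then w y s else f y τ)} := by
  intro x s t hs hst
  have ht : 0 < t := hs.trans hst
  obtain ⟨Mg, hMg⟩ := hgbd
  obtain ⟨Mb, hMb⟩ := hbbd
  set M := max Mg Mb with hMdef
  -- f is bounded below
  have hfbd : ∀ (y : EuclideanSpace ℝ (Fin n)) (τ : ℝ), 0 ≤ τ → -M ≤ f y τ := by
    intro y τ hτ
    rcases hτ.lt_or_eq with h | h
    · rw [hfp y τ h]
      have h1 := (abs_le.1 (hMb y)).1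
      have h2 : Mb ≤ M := le_max_right _ _
      linarith
    · rw [← h, hf0]
      have h1 := (abs_le.1 (hMg y)).1
      have h2 : Mg ≤ M := le_max_left _ _
      linarith
  -- lower bound for the Lagrangian term
  have hLlb : ∀ (a : ℝ) (v : EuclideanSpace ℝ (Fin n)), 0 < a → a ≤ t →
      -(t * K₀) ≤ a * Lbar v := by
    intro a v ha hat
    have h1 : -K₀ ≤ Lbar v := by
      have h2 := (hLb v).1
      nlinarith [sq_nonneg ‖v‖]
    nlinarith
  -- lower bound for elements of the basic sets
  have hSlb : ∀ (z : EuclideanSpace ℝ (Fin n)) (u : ℝ), 0 < u → u ≤ t →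
      ∀ r ∈ {r | ∃ (τ : ℝ) (y : EuclideanSpace ℝ (Fin n)), 0 ≤ τ ∧ τ < u ∧
        r = (u - τ) * Lbar ((u - τ)⁻¹ • (z - y)) + f y τ}, -(t * K₀) - M ≤ r := by
    rintro z u hu hut r ⟨τ, y, hτ0, hτu, rfl⟩
    have h1 : -(t * K₀) ≤ (u - τ) * Lbar ((u - τ)⁻¹ • (z - y)) :=
      hLlb _ _ (by linarith) (by linarith)
    have h2 := hfbd y τ hτ0
    linarith
  have hSbdd : ∀ (z : EuclideanSpace ℝ (Fin n)) (u : ℝ), 0 < u → u ≤ t →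
      BddBelow {r | ∃ (τ : ℝ) (y : EuclideanSpace ℝ (Fin n)), 0 ≤ τ ∧ τ < u ∧
        r = (u - τ) * Lbar ((u - τ)⁻¹ • (z - y)) + f y τ} :=
    fun z u hu hut => ⟨-(t * K₀) - M, fun r hr => hSlb z u hu hut r hr⟩
  have hSne : ∀ (z : EuclideanSpace ℝ (Fin n)) (u : ℝ), 0 < u →
      ({r | ∃ (τ : ℝ) (y : EuclideanSpace ℝ (Fin n)), 0 ≤ τ ∧ τ < u ∧
        r = (u - τ) * Lbar ((u - τ)⁻¹ • (z - y)) + f y τ}).Nonempty :=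
    fun z u hu => ⟨(u - 0) * Lbar ((u - 0)⁻¹ • (z - z)) + f z 0, 0, z, le_refl 0, hu, rfl⟩
  -- lower bound for w at time s
  have hwlb : ∀ y : EuclideanSpace ℝ (Fin n), -(t * K₀) - M ≤ w y s := by
    intro y
    rw [hw y s hs]
    exact le_csInf (hSne y s hs) (hSlb y s hs hst.le)
  -- w at time s is at most each candidate value
  have hwle : ∀ (y z : EuclideanSpace ℝ (Fin n)) (τ : ℝ), 0 ≤ τ → τ < s →
      w y s ≤ (s - τ) * Lbar ((s - τ)⁻¹ • (y - z)) + f z τ := by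
    intro y z τ hτ0 hτs
    rw [hw y s hs]
    exact csInf_le (hSbdd y s hs hst.le) ⟨τ, z, hτ0, hτs, rfl⟩
  -- the B set
  set B : Set ℝ := {r | ∃ (τ : ℝ) (y : EuclideanSpace ℝ (Fin n)), 0 ≤ τ ∧ τ < t ∧
        r = (t - max τ s) * Lbar ((t - max τ s)⁻¹ • (x - y)) +
          (if τ < s then w y s else f y τ)} with hBdef
  have hBne : B.Nonempty := by
    refine ⟨(t - max 0 s) * Lbar ((t - max 0 s)⁻¹ • (x - x)) + (if (0:ℝ) < s then w x s else f x 0),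
      0, x, le_refl 0, ht, rfl⟩
  have hBbdd : BddBelow B := by
    refine ⟨-(t * K₀) - (t * K₀) - M, ?_⟩
    rintro r ⟨τ, y, hτ0, hτt, rfl⟩
    have hσ1 : s ≤ max τ s := le_max_right _ _
    have hσ2 : max τ s < t := max_lt (lt_of_lt_of_le hτt le_rfl) hst
    have h1 : -(t * K₀) ≤ (t - max τ s) * Lbar ((t - max τ s)⁻¹ • (x - y)) :=
      hLlb _ _ (by linarith) (by linarith)
    by_cases hc : τ < s
    · rw [if_pos hc]
      have h2 := hwlb y
      have h3 : (0:ℝ) ≤ t * K₀ := by positivity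
      linarith
    · rw [if_neg hc]
      have h2 := hfbd y τ hτ0
      have h3 : (0:ℝ) ≤ t * K₀ := by positivity
      linarith
  -- convexity inequality for concatenation of straight paths
  have hconv : ∀ (τ' : ℝ) (y z : EuclideanSpace ℝ (Fin n)), 0 ≤ τ' → τ' < s →
      (t - τ') * Lbar ((t - τ')⁻¹ • (x - z)) ≤
        (t - s) * Lbar ((t - s)⁻¹ • (x - y)) + (s - τ') * Lbar ((s - τ')⁻¹ • (y - z)) := by
    intro τ' y z hτ'0 hτ's
    have hts : (0:ℝ) < t - s := by linarith
    have hsτ : (0:ℝ) < s - τ' := by linarith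
    have htτ : (0:ℝ) < t - τ' := by linarith
    set a : ℝ := (t - s) / (t - τ') with ha_def
    set b : ℝ := (s - τ') / (t - τ') with hb_def
    have ha : 0 ≤ a := by positivity
    have hb : 0 ≤ b := by positivity
    have hab : a + b = 1 := by
      rw [ha_def, hb_def, div_eq_mul_inv, div_eq_mul_inv]; linear_combination mul_inv_cancel₀ htτ.ne'
    have hkey : a • ((t - s)⁻¹ • (x - y)) + b • ((s - τ')⁻¹ • (y - z)) =
        (t - τ')⁻¹ • (x - z) := by
      rw [smul_smul, smul_smul]
      have h1 : a * (t - s)⁻¹ = (t - τ')⁻¹ := by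
        rw [ha_def, div_eq_mul_inv]; linear_combination (t - τ')⁻¹ * mul_inv_cancel₀ hts.ne'
      have h2 : b * (s - τ')⁻¹ = (t - τ')⁻¹ := by
        rw [hb_def, div_eq_mul_inv]; linear_combination (t - τ')⁻¹ * mul_inv_cancel₀ hsτ.ne'
      rw [h1, h2, ← smul_add, sub_add_sub_cancel]
    have hcx := hLconv.2 (Set.mem_univ ((t - s)⁻¹ • (x - y)))
      (Set.mem_univ ((s - τ')⁻¹ • (y - z))) ha hb hab
    rw [hkey] at hcx
    have hmul := mul_le_mul_of_nonneg_left hcx htτ.le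
    calc (t - τ') * Lbar ((t - τ')⁻¹ • (x - z))
        ≤ (t - τ') * (a * Lbar ((t - s)⁻¹ • (x - y)) + b * Lbar ((s - τ')⁻¹ • (y - z))) := hmul
      _ = (t - s) * Lbar ((t - s)⁻¹ • (x - y)) + (s - τ') * Lbar ((s - τ')⁻¹ • (y - z)) := by
          rw [ha_def, hb_def, div_eq_mul_inv, div_eq_mul_inv]
          linear_combination ((t - s) * Lbar ((t - s)⁻¹ • (x - y)) + (s - τ') * Lbar ((s - τ')⁻¹ • (y - z))) * mul_inv_cancel₀ htτ.ne'
  rw [hw x t ht]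
  apply le_antisymm
  · -- sInf A ≤ sInf B
    apply le_csInf hBne
    rintro r ⟨τ, y, hτ0, hτt, rfl⟩
    by_cases hc : τ < s
    · rw [if_pos hc, max_eq_right hc.le]
      -- use an ε-optimal element of S y s
      apply le_of_forall_pos_le_add
      intro ε hε
      have hwys := hw y s hs
      obtain ⟨aa, haa, hlt⟩ := Real.lt_sInf_add_pos (hSne y s hs) hε
      obtain ⟨τ', z, hτ'0, hτ's, rfl⟩ := haa
      have hmem : (t - τ') * Lbar ((t - τ')⁻¹ • (x - z)) + f z τ' ∈
          {r | ∃ (τ : ℝ) (y : EuclideanSpace ℝ (Fin n)), 0 ≤ τ ∧ τ < t ∧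
            r = (t - τ) * Lbar ((t - τ)⁻¹ • (x - y)) + f y τ} :=
        ⟨τ', z, hτ'0, hτ's.trans hst, rfl⟩
      have h1 := csInf_le (hSbdd x t ht le_rfl) hmem
      have h2 := hconv τ' y z hτ'0 hτ's
      rw [← hwys] at hlt
      linarith
    · rw [if_neg hc, max_eq_left (not_lt.1 hc)]
      exact csInf_le (hSbdd x t ht le_rfl) ⟨τ, y, hτ0, hτt, rfl⟩
  · -- sInf B ≤ sInf A
    apply le_csInf (hSne x t ht)
    rintro r ⟨τ, y, hτ0, hτt, rfl⟩
    by_cases hc : τ < s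
    · -- intermediate point on the straight line
      set v : EuclideanSpace ℝ (Fin n) := (t - τ)⁻¹ • (x - y) with hv_def
      set y' : EuclideanSpace ℝ (Fin n) := x - (t - s) • v with hy'_def
      have hts : (0:ℝ) < t - s := by linarith
      have hsτ : (0:ℝ) < s - τ := by linarith
      have htτ : (0:ℝ) < t - τ := by linarith
      have hxy : (t - τ) • v = x - y := by
        rw [hv_def, smul_smul, mul_inv_cancel₀ htτ.ne', one_smul]
      have hv1 : (t - s)⁻¹ • (x - y') = v := by
        rw [hy'_def, sub_sub_cancel, smul_smul, inv_mul_cancel₀ hts.ne', one_smul]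
      have hv2 : (s - τ)⁻¹ • (y' - y) = v := by
        have h1 : y' - y = (s - τ) • v := by
          rw [hy'_def]
          have : x - (t - s) • v - y = (x - y) - (t - s) • v := by abel
          rw [this, ← hxy, ← sub_smul]
          congr 1; ring
        rw [h1, smul_smul, inv_mul_cancel₀ hsτ.ne', one_smul]
      have hmemB : (t - max τ s) * Lbar ((t - max τ s)⁻¹ • (x - y')) +
          (if τ < s then w y' s else f y' τ) ∈ B :=
        ⟨τ, y', hτ0, hτt, rfl⟩
      have h1 := csInf_le hBbdd hmemB
      rw [if_pos hc, max_eq_right hc.le, hv1] at h1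
      have h2 := hwle y' y τ hτ0 hc
      rw [hv2] at h2
      have h3 : (t - s) * Lbar v + (s - τ) * Lbar v = (t - τ) * Lbar v := by ring
      linarith
    · have hmemB : (t - max τ s) * Lbar ((t - max τ s)⁻¹ • (x - y)) +
          (if τ < s then w y s else f y τ) ∈ B :=
        ⟨τ, y, hτ0, hτt, rfl⟩
      have h1 := csInf_le hBbdd hmemB
      rw [if_neg hc, max_eq_left (not_lt.1 hc)] at h1
      exact h1
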